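/- Conversely, for every character ψ of I and every i ∈ I with ψ(i) = 1, the functional (a,j) ↦ ψ(θ(a)i) + ψ(j) is a character of A ⋈^θ I; and for every character φ of A, the functional (a,j) ↦ φ(a) is a character of A ⋈^θ I. -/

import Mathlib

noncomputable def amul {A B : Type*} [NonUnitalNormedRing A] [NormedSpace ℂ A]
    [NonUnitalNormedRing B] [NormedSpace ℂ B]
    (θ : A →L[ℂ] B) {I : Submodule ℂ B}
    (hIl : ∀ b i : B, i ∈ I → b * i ∈ I) (hIr : ∀ b i : B, i ∈ I → i * b ∈ I)
    (x y : A × I) : A × I :=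
  (x.1 * y.1,
    ⟨θ x.1 * (y.2 : B) + (x.2 : B) * θ y.1 + (x.2 : B) * (y.2 : B),
      I.add_mem (I.add_mem (hIl _ _ y.2.2) (hIr _ _ x.2.2)) (hIr _ _ x.2.2)⟩)

open NormedSpace

/-- For every character `ψ` of `I` and every `i ∈ I` with `ψ(i) = 1`, the functional
`(a,j) ↦ ψ(θ(a)i) + ψ(j)` is a character of `A ⋈^θ I`; and for every character `φ` of `A`,
the functional `(a,j) ↦ φ(a)` is a character of `A ⋈^θ I`. -/
theorem amalgamation_char_converse {A B : Type*} [NonUnitalNormedRing A]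
    [NormedSpace ℂ A] [IsScalarTower ℂ A A] [SMulCommClass ℂ A A] [CompleteSpace A]
    [NonUnitalNormedRing B] [NormedSpace ℂ B]
    [IsScalarTower ℂ B B] [SMulCommClass ℂ B B] [CompleteSpace B]
    (θ : A →L[ℂ] B) (hθ : ∀ x y : A, θ (x * y) = θ x * θ y)
    (I : Submodule ℂ B) (hIc : IsClosed (I : Set B))
    (hIl : ∀ b i : B, i ∈ I → b * i ∈ I) (hIr : ∀ b i : B, i ∈ I → i * b ∈ I) :
    (∀ (ψ : StrongDual ℂ I),
      (∀ i j : I, ψ ⟨(i : B) * (j : B), hIr _ _ i.2⟩ = ψ i * ψ j) → ψ ≠ 0 →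
      ∀ i : I, ψ i = 1 →
        (∀ x y : A × I,
          (fun p : A × I => ψ ⟨θ p.1 * (i : B), hIl _ _ i.2⟩ + ψ p.2) (amul θ hIl hIr x y)
            = (fun p : A × I => ψ ⟨θ p.1 * (i : B), hIl _ _ i.2⟩ + ψ p.2) x *
              (fun p : A × I => ψ ⟨θ p.1 * (i : B), hIl _ _ i.2⟩ + ψ p.2) y) ∧
        (fun p : A × I => ψ ⟨θ p.1 * (i : B), hIl _ _ i.2⟩ + ψ p.2) ≠ 0 ∧
        Continuous (fun p : A × I => ψ ⟨θ p.1 * (i : B), hIl _ _ i.2⟩ + ψ p.2) ∧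
        IsLinearMap ℂ (fun p : A × I => ψ ⟨θ p.1 * (i : B), hIl _ _ i.2⟩ + ψ p.2)) ∧
    (∀ (φ : StrongDual ℂ A), (∀ a a' : A, φ (a * a') = φ a * φ a') → φ ≠ 0 →
        (∀ x y : A × I,
          (fun p : A × I => φ p.1) (amul θ hIl hIr x y)
            = (fun p : A × I => φ p.1) x * (fun p : A × I => φ p.1) y) ∧
        (fun p : A × I => φ p.1) ≠ 0 ∧
        Continuous (fun p : A × I => φ p.1) ∧
        IsLinearMap ℂ (fun p : A × I => φ p.1)) := by
  constructor
  · intro ψ hψ hψ0 i hi1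
    -- ψ applied to equal underlying elements
    have hcong : ∀ (x y : B) (hx : x ∈ I) (hy : y ∈ I), x = y →
        ψ ⟨x, hx⟩ = ψ ⟨y, hy⟩ := by
      intro x y hx hy h; cases h; rfl
    have key : ∀ (x : B) (hx : x ∈ I) (y : B) (hy : y ∈ I) (hxy : x * y ∈ I),
        ψ ⟨x * y, hxy⟩ = ψ ⟨x, hx⟩ * ψ ⟨y, hy⟩ := by
      intro x hx y hy hxy
      have := hψ ⟨x, hx⟩ ⟨y, hy⟩
      simpa using this
    -- ψ(i * x) = ψ x for x ∈ I
    have hiL : ∀ (x : B) (hx : x ∈ I) (h : (i : B) * x ∈ I),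
        ψ ⟨(i : B) * x, h⟩ = ψ ⟨x, hx⟩ := by
      intro x hx h
      rw [key (i : B) i.2 x hx h]
      have : ψ ⟨(i : B), i.2⟩ = 1 := by
        rw [hcong _ (i : B) i.2 i.2 rfl] at hi1 ⊢
        exact hi1
      rw [this, one_mul]
    have hiR : ∀ (x : B) (hx : x ∈ I) (h : x * (i : B) ∈ I),
        ψ ⟨x * (i : B), h⟩ = ψ ⟨x, hx⟩ := by
      intro x hx h
      rw [key x hx (i : B) i.2 h]
      have : ψ ⟨(i : B), i.2⟩ = 1 := by
        rw [hcong _ (i : B) i.2 i.2 rfl] at hi1 ⊢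
        exact hi1
      rw [this, mul_one]
    -- χ b := ψ (b * i); it is multiplicative
    have hchi_mul : ∀ (b c : B),
        ψ ⟨b * c * (i : B), hIl _ _ i.2⟩
          = ψ ⟨b * (i : B), hIl _ _ i.2⟩ * ψ ⟨c * (i : B), hIl _ _ i.2⟩ := by
      intro b c
      have h1 : ψ ⟨b * c * (i : B), hIl _ _ i.2⟩
          = ψ ⟨(i : B) * (b * c * (i : B)), hIr _ _ i.2⟩ :=
        (hiL _ (hIl _ _ i.2) _).symm
      rw [h1]
      have h2 : (i : B) * (b * c * (i : B)) = ((i : B) * b) * (c * (i : B)) := by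
        simp only [mul_assoc]
      rw [hcong _ _ _ (hIl _ _ (hIl c _ i.2)) h2]
      rw [key _ (hIr b _ i.2) _ (hIl c _ i.2) _]
      congr 1
      -- ψ (i * b) = ψ (b * i)
      have h3 : ψ ⟨(i : B) * b, hIr b _ i.2⟩
          = ψ ⟨((i : B) * b) * (i : B), hIr _ _ (hIr b _ i.2)⟩ :=
        (hiR _ (hIr b _ i.2) _).symm
      rw [h3]
      have h4 : ((i : B) * b) * (i : B) = (i : B) * (b * (i : B)) := mul_assoc _ _ _
      rw [hcong _ _ _ (hIl _ _ (hIl b _ i.2)) h4]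
      exact hiL _ (hIl b _ i.2) _
    -- ψ(b * j) = ψ(b*i) * ψ(j),  ψ(j * b) = ψ(j) * ψ(b*i)
    have hbj : ∀ (b : B) (j : I) (h : b * (j : B) ∈ I),
        ψ ⟨b * (j : B), h⟩ = ψ ⟨b * (i : B), hIl _ _ i.2⟩ * ψ j := by
      intro b j h
      have h1 : ψ ⟨b * (j : B), h⟩ = ψ ⟨(i : B) * (b * (j : B)), hIr _ _ i.2⟩ :=
        (hiL _ h _).symm
      rw [h1]
      have h2 : (i : B) * (b * (j : B)) = ((i : B) * b) * (j : B) := (mul_assoc _ _ _).symm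
      rw [hcong _ _ _ (hIl _ _ j.2) h2]
      rw [key _ (hIr b _ i.2) _ j.2 _]
      congr 1
      have h3 : ψ ⟨(i : B) * b, hIr b _ i.2⟩
          = ψ ⟨((i : B) * b) * (i : B), hIr _ _ (hIr b _ i.2)⟩ :=
        (hiR _ (hIr b _ i.2) _).symm
      rw [h3]
      have h4 : ((i : B) * b) * (i : B) = (i : B) * (b * (i : B)) := mul_assoc _ _ _
      rw [hcong _ _ _ (hIl _ _ (hIl b _ i.2)) h4]
      exact hiL _ (hIl b _ i.2) _
    have hjb : ∀ (b : B) (j : I) (h : (j : B) * b ∈ I),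
        ψ ⟨(j : B) * b, h⟩ = ψ j * ψ ⟨b * (i : B), hIl _ _ i.2⟩ := by
      intro b j h
      have h1 : ψ ⟨(j : B) * b, h⟩ = ψ ⟨((j : B) * b) * (i : B), hIr _ _ h⟩ :=
        (hiR _ h _).symm
      rw [h1]
      have h2 : ((j : B) * b) * (i : B) = (j : B) * (b * (i : B)) := mul_assoc _ _ _
      rw [hcong _ _ _ (hIl _ _ (hIl b _ i.2)) h2]
      rw [key _ j.2 _ (hIl b _ i.2) _]
    refine ⟨?_, ?_, ?_, ?_⟩
    · -- multiplicative
      intro x y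
      simp only [amul]
      have hsplit : (⟨θ x.1 * (y.2 : B) + (x.2 : B) * θ y.1 + (x.2 : B) * (y.2 : B),
          I.add_mem (I.add_mem (hIl _ _ y.2.2) (hIr _ _ x.2.2)) (hIr _ _ x.2.2)⟩ : I)
          = (⟨θ x.1 * (y.2 : B), hIl _ _ y.2.2⟩ : I) + ⟨(x.2 : B) * θ y.1, hIr _ _ x.2.2⟩
            + ⟨(x.2 : B) * (y.2 : B), hIr _ _ x.2.2⟩ := rfl
      rw [hsplit, map_add, map_add]
      rw [hbj (θ x.1) y.2 _, hjb (θ y.1) x.2 _, key _ x.2.2 _ y.2.2 _]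
      have hθxy : ψ ⟨θ (x.1 * y.1) * (i : B), hIl _ _ i.2⟩
          = ψ ⟨θ x.1 * (i : B), hIl _ _ i.2⟩ * ψ ⟨θ y.1 * (i : B), hIl _ _ i.2⟩ := by
        rw [hcong _ (θ x.1 * θ y.1 * (i : B)) _ (hIl _ _ i.2) (by rw [hθ])]
        exact hchi_mul _ _
      rw [hθxy]
      ring
    · -- nonzero
      intro h
      have := congrFun h (0, i)
      simp only [Pi.zero_apply] at this
      rw [hcong _ 0 _ I.zero_mem (by simp), hi1] at this
      rw [show (⟨(0 : B), I.zero_mem⟩ : I) = 0 from rfl, map_zero, zero_add] at this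
      exact one_ne_zero this
    · -- continuous
      have c1 : Continuous fun p : A × I => (⟨θ p.1 * (i : B), hIl _ _ i.2⟩ : I) := by
        apply Continuous.subtype_mk
        exact (θ.continuous.comp continuous_fst).mul continuous_const
      exact ((ψ.continuous.comp c1).add (ψ.continuous.comp continuous_snd))
    · -- linear
      constructor
      · intro p q
        have h1 : (⟨θ (p.1 + q.1) * (i : B), hIl _ _ i.2⟩ : I)
            = (⟨θ p.1 * (i : B), hIl _ _ i.2⟩ : I) + ⟨θ q.1 * (i : B), hIl _ _ i.2⟩ := by
          apply Subtype.ext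
          simp [add_mul]
        show ψ ⟨θ ((p + q).1) * (i : B), _⟩ + ψ ((p + q).2) = _
        rw [show (p + q).1 = p.1 + q.1 from rfl, show (p + q).2 = p.2 + q.2 from rfl,
          h1, map_add, map_add]
        ring
      · intro c p
        have h1 : (⟨θ (c • p.1) * (i : B), hIl _ _ i.2⟩ : I)
            = c • (⟨θ p.1 * (i : B), hIl _ _ i.2⟩ : I) := by
          apply Subtype.ext
          simp [smul_mul_assoc]
        show ψ ⟨θ ((c • p).1) * (i : B), _⟩ + ψ ((c • p).2) = _
        rw [show (c • p).1 = c • p.1 from rfl, show (c • p).2 = c • p.2 from rfl,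
          h1, map_smul, map_smul]
        simp only [smul_eq_mul]
        ring
  · intro φ hφ hφ0
    refine ⟨?_, ?_, ?_, ?_⟩
    · intro x y
      simp only [amul]
      exact hφ x.1 y.1
    · intro h
      apply hφ0
      ext a
      have := congrFun h (a, 0)
      simpa using this
    · exact φ.continuous.comp continuous_fst
    · exact ⟨fun p q => by simp, fun c p => by simp⟩
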